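/- Let K be a field, let F_1, …, F_r be symmetric r×r matrices over K, let γ ∈ K^r, and suppose G = Σ_{M=1}^r γ_M F_M is invertible and the generalized WDVV equations F_I·G^{-1}·F_J = F_J·G^{-1}·F_I hold for all I, J. Let H be an invertible symmetric r×r matrix over K, and define F̃_I = − Σ_{P=1}^r (H^{-1})_{IP} · (H^{-1}·F_P·H^{-1}) for I = 1, …, r. Then each F̃_I is symmetric, and with weights γ̃ = −H·γ the matrix G̃ = Σ_{M=1}^r γ̃_M F̃_M = H^{-1}·G·H^{-1} is invertible and the generalized WDVV equations F̃_I·G̃^{-1}·F̃_J = F̃_J·G̃^{-1}·F̃_I hold for all I, J. (This is the algebraic form of the covariance of the generalized WDVV equations under the S-duality transformation, where H plays the role of the Hessian.) -/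

import Mathlib

open Matrix

/-- Algebraic covariance of the generalized WDVV equations under S-duality:
given symmetric `F I` satisfying the WDVV equations with weights `γ` and invertible
combination `G`, and an invertible symmetric matrix `H` (the Hessian), the matrices
`F̃ I = -∑ P, (H⁻¹) I P • (H⁻¹ * F P * H⁻¹)` are symmetric, the combination
`G̃ = ∑ M, γ̃ M • F̃ M` for `γ̃ = -H.mulVec γ` equals `H⁻¹ * G * H⁻¹`, is invertible,
and the WDVV equations hold for the `F̃ I`. -/
theorem wdvv_covariance_S_duality
    {K : Type*} [Field K] {r : ℕ}
    (F : Fin r → Matrix (Fin r) (Fin r) K)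
    (hsymm : ∀ I, (F I)ᵀ = F I)
    (γ : Fin r → K)
    (G : Matrix (Fin r) (Fin r) K)
    (hG : G = ∑ M, γ M • F M)
    (hGinv : IsUnit G)
    (hwdvv : ∀ I J, F I * G⁻¹ * F J = F J * G⁻¹ * F I)
    (H : Matrix (Fin r) (Fin r) K) (hHsymm : Hᵀ = H) (hHinv : IsUnit H)
    (Ft : Fin r → Matrix (Fin r) (Fin r) K)
    (hFt : ∀ I, Ft I = -∑ P, H⁻¹ I P • (H⁻¹ * F P * H⁻¹))
    (γt : Fin r → K) (hγt : γt = -(H.mulVec γ))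
    (Gt : Matrix (Fin r) (Fin r) K)
    (hGt : Gt = ∑ M, γt M • Ft M) :
    (∀ I, (Ft I)ᵀ = Ft I) ∧
    Gt = H⁻¹ * G * H⁻¹ ∧
    IsUnit Gt ∧
    ∀ I J, Ft I * Gt⁻¹ * Ft J = Ft J * Gt⁻¹ * Ft I := by
  have hHd : IsUnit H.det := (Matrix.isUnit_iff_isUnit_det H).mp hHinv
  have hHiT : (H⁻¹)ᵀ = H⁻¹ := by rw [Matrix.transpose_nonsing_inv, hHsymm]
  have hHiU : IsUnit (H⁻¹) := by
    rw [Matrix.isUnit_iff_isUnit_det, Matrix.det_nonsing_inv]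
    exact hHd.ringInverse
  -- symmetry
  have hFtsymm : ∀ I, (Ft I)ᵀ = Ft I := by
    intro I
    rw [hFt, transpose_neg, transpose_sum]
    congr 1
    refine Finset.sum_congr rfl fun P _ => ?_
    rw [transpose_smul, transpose_mul, transpose_mul, hsymm, hHiT, mul_assoc]
  -- Gt formula
  have hGtEq : Gt = H⁻¹ * G * H⁻¹ := by
    have hvec : ∀ P : Fin r, ∑ M, (H.mulVec γ) M * H⁻¹ M P = γ P := by
      intro P
      have h1 : H.mulVec γ = γ ᵥ* H := by rw [← Matrix.vecMul_transpose, hHsymm]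
      have : ((H.mulVec γ) ᵥ* H⁻¹) P = γ P := by
        rw [h1, Matrix.vecMul_vecMul, Matrix.mul_nonsing_inv _ hHd, Matrix.vecMul_one]
      simpa [Matrix.vecMul, dotProduct] using this
    calc Gt = ∑ M, ∑ P, ((H.mulVec γ) M * H⁻¹ M P) • (H⁻¹ * F P * H⁻¹) := by
          rw [hGt]
          refine Finset.sum_congr rfl fun M _ => ?_
          rw [hγt, hFt]
          rw [Pi.neg_apply, neg_smul, smul_neg, neg_neg, Finset.smul_sum]
          exact Finset.sum_congr rfl fun P _ => by rw [smul_smul]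
      _ = ∑ P, (∑ M, (H.mulVec γ) M * H⁻¹ M P) • (H⁻¹ * F P * H⁻¹) := by
          rw [Finset.sum_comm]
          exact Finset.sum_congr rfl fun P _ => (Finset.sum_smul).symm
      _ = ∑ P, γ P • (H⁻¹ * F P * H⁻¹) := by
          exact Finset.sum_congr rfl fun P _ => by rw [hvec]
      _ = H⁻¹ * G * H⁻¹ := by
          rw [hG, Finset.mul_sum, Finset.sum_mul]
          exact Finset.sum_congr rfl fun P _ => by
            simp [Matrix.mul_smul, Matrix.smul_mul]
  have hGtinv : IsUnit Gt := by
    rw [hGtEq]; exact (hHiU.mul hGinv).mul hHiU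
  have hGtinvEq : Gt⁻¹ = H * G⁻¹ * H := by
    rw [hGtEq, Matrix.mul_inv_rev, Matrix.mul_inv_rev,
      Matrix.nonsing_inv_nonsing_inv _ hHd, mul_assoc]
  refine ⟨hFtsymm, hGtEq, hGtinv, fun I J => ?_⟩
  have key : ∀ P Q : Fin r,
      (H⁻¹ * F P * H⁻¹) * (H * G⁻¹ * H) * (H⁻¹ * F Q * H⁻¹)
        = H⁻¹ * (F P * G⁻¹ * F Q) * H⁻¹ := by
    intro P Q
    simp only [mul_assoc, Matrix.nonsing_inv_mul_cancel_left _ _ hHd,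
      Matrix.mul_nonsing_inv_cancel_left _ _ hHd]
  have expand : ∀ I' J' : Fin r, Ft I' * Gt⁻¹ * Ft J'
      = ∑ P, ∑ Q, (H⁻¹ I' P * H⁻¹ J' Q) • (H⁻¹ * (F P * G⁻¹ * F Q) * H⁻¹) := by
    intro I' J'
    rw [hFt I', hFt J', hGtinvEq, neg_mul, neg_mul, mul_neg, neg_neg,
      Finset.sum_mul, Finset.sum_mul]
    refine Finset.sum_congr rfl fun P _ => ?_
    rw [smul_mul_assoc, smul_mul_assoc, Finset.mul_sum]
    rw [Finset.smul_sum]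
    refine Finset.sum_congr rfl fun Q _ => ?_
    rw [mul_smul_comm, smul_smul, ← key P Q]
  rw [expand, expand, Finset.sum_comm]
  refine Finset.sum_congr rfl fun P _ => Finset.sum_congr rfl fun Q _ => ?_
  rw [hwdvv Q P, mul_comm]
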